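/- A p-row tableau A = [a^1, ..., a^p] with all rows in D is standard if and only if every 2-row subtableau [a^h, a^k] with h < k is standard. Equivalently, A is standard if and only if a^h_j ≤ a^k_j for all 1 ≤ h < k ≤ p and all columns j. -/

import Mathlib

def lexGT {n : ℕ} (u v : Fin n → ℕ) : Prop :=
  ∃ i : Fin n, u i < v i ∧ ∀ j : Fin n, j < i → u j = v j

def lexGE {n : ℕ} (u v : Fin n → ℕ) : Prop := u = v ∨ lexGT u v

def inD {n : ℕ} (m : ℕ) (a : Fin n → ℕ) : Prop :=
  (∀ j, 1 ≤ a j) ∧ StrictMono a ∧ ∀ j, a j ≤ m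

def colMultiset {p n : ℕ} (A : Fin p → Fin n → ℕ) (j : Fin n) : Multiset ℕ :=
  Finset.univ.val.map (fun i => A i j)

/-- `T_{B 0} ⋯ T_{B (p-1)} >_σ T_{A 0} ⋯ T_{A (p-1)}` in the graded reverse
lexicographic order, for tableaux whose rows are sorted τ-decreasingly: the comparison
is decided at the last row (from the bottom) where the tableaux differ. -/
def sigmaGTrows {p n : ℕ} (B A : Fin p → Fin n → ℕ) : Prop :=
  ∃ k : Fin p, (∀ l : Fin p, k < l → B l = A l) ∧ lexGT (B k) (A k)

/-- A semistandard `p`-row tableau `A` with rows in `D` is standard (σ-minimal among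
all semistandard tableaux with the same column supports) iff
`A h j ≤ A k j` for all `h < k` and all columns `j`; equivalently, iff every 2-row
subtableau is standard. -/
lemma lexGT_asymm {n : ℕ} {u v : Fin n → ℕ} (h1 : lexGT u v) (h2 : lexGT v u) : False := by
  obtain ⟨i1, hi1, he1⟩ := h1
  obtain ⟨i2, hi2, he2⟩ := h2
  rcases lt_trichotomy i1 i2 with h | h | h
  · have := he2 i1 h; omega
  · subst h; omega
  · have := he1 i2 h; omega

lemma lexGE_of_le {n : ℕ} {u v : Fin n → ℕ} (h : ∀ j, u j ≤ v j) : lexGE u v := by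
  by_cases he : u = v
  · exact Or.inl he
  · right
    have hne : (Finset.univ.filter (fun j => u j ≠ v j)).Nonempty := by
      by_contra hc
      apply he; funext j
      by_contra hj
      exact hc ⟨j, Finset.mem_filter.mpr ⟨Finset.mem_univ _, hj⟩⟩
    set i := Finset.min' _ hne with hi
    have hmem : u i ≠ v i := (Finset.mem_filter.mp (Finset.min'_mem _ hne)).2
    refine ⟨i, lt_of_le_of_ne (h i) hmem, fun j hj => ?_⟩
    by_contra hj'
    exact absurd (Finset.min'_le _ j (Finset.mem_filter.mpr ⟨Finset.mem_univ _, hj'⟩)) (not_le.mpr hj)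

lemma sigmaGTrows_asymm {p n : ℕ} {B A : Fin p → Fin n → ℕ}
    (h1 : sigmaGTrows B A) (h2 : sigmaGTrows A B) : False := by
  obtain ⟨k1, hg1, hl1⟩ := h1
  obtain ⟨k2, hg2, hl2⟩ := h2
  rcases lt_trichotomy k1 k2 with h | h | h
  · obtain ⟨i, hi, -⟩ := hl2
    rw [hg1 k2 h] at hi; omega
  · subst h; exact lexGT_asymm hl1 hl2
  · obtain ⟨i, hi, -⟩ := hl1
    rw [hg2 k1 h] at hi; omega

lemma sigma_of_colstd {p n : ℕ} (B A : Fin p → Fin n → ℕ)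
    (hA : ∀ h k : Fin p, h ≤ k → ∀ j, A h j ≤ A k j)
    (hcol : ∀ j, colMultiset B j = colMultiset A j)
    (hne : B ≠ A) : sigmaGTrows B A := by
  have hrne : (Finset.univ.filter (fun l => B l ≠ A l)).Nonempty := by
    by_contra hc
    apply hne; funext l
    by_contra hl
    exact hc ⟨l, Finset.mem_filter.mpr ⟨Finset.mem_univ _, hl⟩⟩
  set k := Finset.max' _ hrne with hkdef
  have hk : B k ≠ A k := (Finset.mem_filter.mp (Finset.max'_mem _ hrne)).2
  have hgt : ∀ l, k < l → B l = A l := by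
    intro l hl
    by_contra h
    exact absurd (Finset.le_max' _ l (Finset.mem_filter.mpr ⟨Finset.mem_univ _, h⟩)) (not_le.mpr hl)
  refine ⟨k, hgt, ?_⟩
  have hcne : (Finset.univ.filter (fun j => B k j ≠ A k j)).Nonempty := by
    by_contra hc
    apply hk; funext j
    by_contra hj
    exact hc ⟨j, Finset.mem_filter.mpr ⟨Finset.mem_univ _, hj⟩⟩
  set i := Finset.min' _ hcne with hidef
  have hi : B k i ≠ A k i := (Finset.mem_filter.mp (Finset.min'_mem _ hcne)).2
  refine ⟨i, ?_, fun j hj => ?_⟩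
  · -- B k i < A k i via multiset argument
    have hsplit : ∀ C : Fin p → Fin n → ℕ,
        colMultiset C i = ((Finset.univ.filter (fun l : Fin p => l ≤ k)).val.map (fun l => C l i))
          + ((Finset.univ.filter (fun l : Fin p => ¬ l ≤ k)).val.map (fun l => C l i)) := by
      intro C
      rw [colMultiset, ← Multiset.map_add]
      congr 1
      exact (Multiset.filter_add_not _ _).symm
    have heq2 : (Finset.univ.filter (fun l : Fin p => ¬ l ≤ k)).val.map (fun l => B l i)
        = (Finset.univ.filter (fun l : Fin p => ¬ l ≤ k)).val.map (fun l => A l i) := by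
      apply Multiset.map_congr rfl
      intro l hl
      have : ¬ l ≤ k := (Finset.mem_filter.mp (Finset.mem_val.mp hl)).2
      rw [hgt l (not_le.mp this)]
    have h3 := hcol i
    rw [hsplit B, hsplit A, heq2] at h3
    have h4 := add_right_cancel h3
    have hmem : B k i ∈ (Finset.univ.filter (fun l : Fin p => l ≤ k)).val.map (fun l => B l i) :=
      Multiset.mem_map.mpr ⟨k, by simp, rfl⟩
    rw [h4] at hmem
    obtain ⟨l, hl, hlv⟩ := Multiset.mem_map.mp hmem
    have hlk : l ≤ k := by
      have := Finset.mem_filter.mp (Multiset.mem_toFinset.mp (Multiset.mem_toFinset.mpr hl))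
      exact this.2
    have := hA l k hlk i
    omega
  · by_contra hj'
    exact absurd (Finset.min'_le _ j (Finset.mem_filter.mpr ⟨Finset.mem_univ _, hj'⟩)) (not_le.mpr hj)

lemma orderstat {p : ℕ} (f g : Fin p → ℕ) (σ τ : Equiv.Perm (Fin p))
    (hx : Monotone (fun l => f (σ l))) (hy : Monotone (fun l => g (τ l)))
    (h : ∀ l, f l < g l) (i : Fin p) : f (σ i) < g (τ i) := by
  by_contra hc
  push_neg at hc
  have hsub : (Finset.Iic i).image τ ⊆ (Finset.Iio i).image σ := by
    intro l hl
    obtain ⟨a, ha, rfl⟩ := Finset.mem_image.mp hl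
    have h2 : g (τ a) ≤ g (τ i) := hy (Finset.mem_Iic.mp ha)
    have h3 : f (τ a) < f (σ i) := lt_of_lt_of_le (lt_of_lt_of_le (h _) h2) hc
    have h4 : σ.symm (τ a) < i := by
      by_contra h5
      push_neg at h5
      have h6 := hx h5
      simp only [Equiv.apply_symm_apply] at h6
      omega
    exact Finset.mem_image.mpr ⟨σ.symm (τ a), Finset.mem_Iio.mpr h4, Equiv.apply_symm_apply σ _⟩
  have c1 := Finset.card_le_card hsub
  rw [Finset.card_image_of_injective _ τ.injective,
    Finset.card_image_of_injective _ σ.injective, Fin.card_Iic, Fin.card_Iio] at c1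
  omega

theorem stmt_5 {p n m : ℕ} (A : Fin p → Fin n → ℕ)
    (hrows : ∀ h, inD m (A h))
    (hsemi : ∀ h k : Fin p, h ≤ k → lexGE (A h) (A k)) :
    (∀ B : Fin p → Fin n → ℕ, (∀ h, inD m (B h)) →
        (∀ h k : Fin p, h ≤ k → lexGE (B h) (B k)) →
        (∀ j, colMultiset B j = colMultiset A j) → B ≠ A → sigmaGTrows B A) ↔
      ∀ h k : Fin p, h < k → ∀ j, A h j ≤ A k j := by
  constructor
  · intro H h k hhk j
    by_contra hcon
    push_neg at hcon
    set B : Fin p → Fin n → ℕ := fun i j' => A (Tuple.sort (fun l => A l j') i) j' with hB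
    have hBmono : ∀ j' : Fin n, Monotone (fun i => B i j') := fun j' =>
      Tuple.monotone_sort (fun l => A l j')
    have hBcol : ∀ j', colMultiset B j' = colMultiset A j' := by
      intro j'
      rw [colMultiset, colMultiset]
      have h1 : (fun i => B i j') = (fun l => A l j') ∘ (Tuple.sort (fun l => A l j')) := rfl
      rw [h1, ← Multiset.map_map]
      congr 1
      have := congr_arg Finset.val (Finset.map_univ_equiv (Tuple.sort (fun l => A l j')))
      rw [Finset.map_val] at this
      exact this
    have hBstd : ∀ h k : Fin p, h ≤ k → ∀ j', B h j' ≤ B k j' := fun h k hle j' =>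
      hBmono j' hle
    have hBrows : ∀ i, inD m (B i) := by
      intro i
      refine ⟨fun j' => (hrows _).1 j', ?_, fun j' => (hrows _).2.2 j'⟩
      intro j1 j2 hj
      exact orderstat (fun l => A l j1) (fun l => A l j2) _ _
        (Tuple.monotone_sort (fun l => A l j1)) (Tuple.monotone_sort (fun l => A l j2))
        (fun l => (hrows l).2.1 hj) i
    have hBsemi : ∀ h k : Fin p, h ≤ k → lexGE (B h) (B k) := fun h k hle =>
      lexGE_of_le (fun j' => hBstd h k hle j')
    have hBne : B ≠ A := by
      intro he
      have := hBstd h k (le_of_lt hhk) j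
      rw [he] at this
      omega
    have h1 := H B hBrows hBsemi hBcol hBne
    have h2 := sigma_of_colstd A B hBstd (fun j' => (hBcol j').symm) (fun he => hBne he.symm)
    exact sigmaGTrows_asymm h1 h2
  · intro hstd B _ _ hcol hne
    exact sigma_of_colstd B A
      (fun h k hle j => hle.lt_or_eq.elim (fun h' => hstd h k h' j) (fun h' => by rw [h'])) hcol hne
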